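/- Let K^{(3)} be the CRG with five white vertices u, v_1, w_1, v_2, w_2, in which the edges {v_1, w_1} and {v_2, w_2} are black and all other edges are gray. Then for every p ∈ [0,1], g_{K^{(3)}}(p) = min{ p/3, p/(1+4p) }. -/

import Mathlib

/-- Colors for edges of a colored regularity graph. -/
inductive EColor : Type
  | white
  | gray
  | black
deriving DecidableEq

/-- A colored regularity graph (CRG) on a finite vertex type `V`: each vertex is
white or black (`vWhite v = true` means white), and each pair of distinct vertices
gets a symmetric edge color (white, gray or black). -/
structure CRG (V : Type) [Fintype V] where
  vWhite : V → Bool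
  ecolor : V → V → EColor
  ecolor_symm : ∀ u v, ecolor u v = ecolor v u

namespace CRG

variable {V : Type} [Fintype V] [DecidableEq V]

/-- The matrix `M_K(p)`. -/
noncomputable def M (K : CRG V) (p : ℝ) (u v : V) : ℝ :=
  if u = v then (if K.vWhite u then p else 1 - p)
  else
    match K.ecolor u v with
    | EColor.white => p
    | EColor.black => 1 - p
    | EColor.gray => 0

/-- The function `g_K(p)`: the minimum of `xᵀ M_K(p) x` over nonnegative weight
vectors summing to `1`. -/
noncomputable def g (K : CRG V) (p : ℝ) : ℝ :=
  sInf {r : ℝ | ∃ x : V → ℝ, (∀ v, 0 ≤ x v) ∧ (∑ v, x v) = 1 ∧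
    r = ∑ u, ∑ v, x u * K.M p u v * x v}

/-- The sub-CRG induced on a subset `s` of the vertices. -/
def sub (K : CRG V) (s : Finset V) : CRG {v // v ∈ s} where
  vWhite := fun v => K.vWhite v.1
  ecolor := fun u v => K.ecolor u.1 v.1
  ecolor_symm := fun u v => K.ecolor_symm u.1 v.1

/-- `K` is `p`-core if `g_K(p) < g_{K'}(p)` for every proper (nonempty) sub-CRG `K'`. -/
def IsPCore (K : CRG V) (p : ℝ) : Prop :=
  ∀ s : Finset V, s.Nonempty → s ≠ Finset.univ → K.g p < (K.sub s).g p

/-- `x` is an optimal weight vector for `K` at `p`. -/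
def IsOptWeight (K : CRG V) (p : ℝ) (x : V → ℝ) : Prop :=
  (∀ v, 0 ≤ x v) ∧ (∑ v, x v) = 1 ∧
    (∑ u, ∑ v, x u * K.M p u v * x v) = K.g p

/-- The gray degree `d_G(v)`: total weight of gray neighbors of `v`. -/
noncomputable def dG (K : CRG V) (x : V → ℝ) (v : V) : ℝ :=
  ∑ w ∈ Finset.univ.filter fun w => w ≠ v ∧ K.ecolor v w = EColor.gray, x w

/-- The white degree `d_W(v)`: total weight of white neighbors of `v`, including `v`
itself if `v` is white. -/
noncomputable def dW (K : CRG V) (x : V → ℝ) (v : V) : ℝ :=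
  (∑ w ∈ Finset.univ.filter fun w => w ≠ v ∧ K.ecolor v w = EColor.white, x w) +
    (if K.vWhite v then x v else 0)

/-- The black degree `d_B(v)`: total weight of black neighbors of `v`, including `v`
itself if `v` is black. -/
noncomputable def dB (K : CRG V) (x : V → ℝ) (v : V) : ℝ :=
  (∑ w ∈ Finset.univ.filter fun w => w ≠ v ∧ K.ecolor v w = EColor.black, x w) +
    (if K.vWhite v then 0 else x v)

/-- The number of gray neighbors of `v`. -/
def grayDeg (K : CRG V) (v : V) : ℕ :=
  (Finset.univ.filter fun w => w ≠ v ∧ K.ecolor v w = EColor.gray).card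

end CRG

/-- A graph `H` embeds in a CRG `K`, written `H ↦ K`. -/
def EmbedsIn {α : Type*} {V : Type} [Fintype V] (H : SimpleGraph α) (K : CRG V) : Prop :=
  ∃ φ : α → V,
    (∀ a b : α, H.Adj a b →
      (φ a = φ b ∧ K.vWhite (φ a) = false) ∨
      (φ a ≠ φ b ∧ (K.ecolor (φ a) (φ b) = EColor.black ∨ K.ecolor (φ a) (φ b) = EColor.gray))) ∧
    (∀ a b : α, a ≠ b → ¬H.Adj a b →
      (φ a = φ b ∧ K.vWhite (φ a) = true) ∨
      (φ a ≠ φ b ∧ (K.ecolor (φ a) (φ b) = EColor.white ∨ K.ecolor (φ a) (φ b) = EColor.gray)))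

/-- The CRG `K⁽³⁾`: five white vertices `u = 0`, `v₁ = 1`, `w₁ = 2`, `v₂ = 3`, `w₂ = 4`;
the edges `{v₁, w₁}` and `{v₂, w₂}` are black and all other edges are gray. -/
def K3 : CRG (Fin 5) where
  vWhite := fun _ => true
  ecolor := fun i j =>
    if (i = 1 ∧ j = 2) ∨ (i = 2 ∧ j = 1) ∨ (i = 3 ∧ j = 4) ∨ (i = 4 ∧ j = 3) then
      EColor.black
    else EColor.gray
  ecolor_symm := by decide

theorem g_K3 : ∀ p ∈ Set.Icc (0 : ℝ) 1,
    K3.g p = min (p / 3) (p / (1 + 4 * p)) := by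
  intro p hp
  obtain ⟨hp0, hp1⟩ := hp
  have h4p : (0:ℝ) < 1 + 4 * p := by linarith
  have hQ : ∀ x : Fin 5 → ℝ, (∑ u, ∑ v, x u * K3.M p u v * x v)
      = p * (x 0 ^ 2 + x 1 ^ 2 + x 2 ^ 2 + x 3 ^ 2 + x 4 ^ 2)
        + 2 * (1 - p) * (x 1 * x 2 + x 3 * x 4) := by
    intro x
    simp only [Fin.sum_univ_five]
    simp (config := { decide := true }) only [CRG.M, K3, if_true, if_false]
    ring
  set m := min (p / 3) (p / (1 + 4 * p)) with hm
  set S : Set ℝ := {r : ℝ | ∃ x : Fin 5 → ℝ, (∀ v, 0 ≤ x v) ∧ (∑ v, x v) = 1 ∧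
    r = ∑ u, ∑ v, x u * K3.M p u v * x v} with hS
  have hlb : ∀ r ∈ S, m ≤ r := by
    rintro r ⟨x, hx, hsum, rfl⟩
    rw [hQ]
    rw [Fin.sum_univ_five] at hsum
    have h0 := hx 0; have h1 := hx 1; have h2 := hx 2; have h3 := hx 3; have h4 := hx 4
    have hs2 : (x 0 + x 1 + x 2 + x 3 + x 4) ^ 2 = 1 := by rw [hsum]; norm_num
    have hps : p * (x 0 + x 1 + x 2 + x 3 + x 4) ^ 2 = p := by rw [hs2, mul_one]
    rcases le_or_gt p (1/2) with hhalf | hhalf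
    · refine le_trans (min_le_left _ _) ?_
      have key : 3 * (p * (x 0 ^ 2 + x 1 ^ 2 + x 2 ^ 2 + x 3 ^ 2 + x 4 ^ 2)
            + 2 * (1 - p) * (x 1 * x 2 + x 3 * x 4))
          - p * (x 0 + x 1 + x 2 + x 3 + x 4) ^ 2
          = p * (x 0 - x 1 - x 2) ^ 2 + p * (x 0 - x 3 - x 4) ^ 2
            + p * (x 1 + x 2 - x 3 - x 4) ^ 2
            + 6 * ((1 - 2*p) * (x 1 * x 2)) + 6 * ((1 - 2*p) * (x 3 * x 4)) := by ring
      linarith [mul_nonneg hp0 (sq_nonneg (x 0 - x 1 - x 2)),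
        mul_nonneg hp0 (sq_nonneg (x 0 - x 3 - x 4)),
        mul_nonneg hp0 (sq_nonneg (x 1 + x 2 - x 3 - x 4)),
        mul_nonneg (mul_nonneg (by linarith : (0:ℝ) ≤ 1 - 2*p) h1) h2,
        mul_nonneg (mul_nonneg (by linarith : (0:ℝ) ≤ 1 - 2*p) h3) h4, hps, key]
    · refine le_trans (min_le_right _ _) ?_
      rw [div_le_iff₀ h4p]
      have key : (p * (x 0 ^ 2 + x 1 ^ 2 + x 2 ^ 2 + x 3 ^ 2 + x 4 ^ 2)
            + 2 * (1 - p) * (x 1 * x 2 + x 3 * x 4)) * (1 + 4 * p)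
          - p * (x 0 + x 1 + x 2 + x 3 + x 4) ^ 2
          = (1/2) * (x 1 + x 2 - 2*p*(x 0)) ^ 2 + (1/2) * (x 3 + x 4 - 2*p*(x 0)) ^ 2
            + p * (x 1 + x 2 - x 3 - x 4) ^ 2
            + (1/2) * ((1 + 4*p) * (2*p - 1) * (x 1 - x 2) ^ 2)
            + (1/2) * ((1 + 4*p) * (2*p - 1) * (x 3 - x 4) ^ 2) := by ring
      linarith [sq_nonneg (x 1 + x 2 - 2*p*(x 0)),
        sq_nonneg (x 3 + x 4 - 2*p*(x 0)),
        mul_nonneg hp0 (sq_nonneg (x 1 + x 2 - x 3 - x 4)),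
        mul_nonneg (mul_nonneg h4p.le (by linarith : (0:ℝ) ≤ 2*p - 1)) (sq_nonneg (x 1 - x 2)),
        mul_nonneg (mul_nonneg h4p.le (by linarith : (0:ℝ) ≤ 2*p - 1)) (sq_nonneg (x 3 - x 4)),
        hps, key]
  have hmem : m ∈ S := by
    rcases le_or_gt p (1/2) with hhalf | hhalf
    · have hmin : m = p / 3 := by
        rw [hm, min_eq_left]
        rw [div_le_div_iff₀ (by norm_num) h4p]
        nlinarith
      refine ⟨![1/3, 1/3, 0, 1/3, 0], ?_, ?_, ?_⟩
      · intro v; fin_cases v <;> norm_num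
      · rw [Fin.sum_univ_five]; norm_num [Matrix.cons_val_two, Matrix.cons_val_three, Matrix.cons_val_four]
      · rw [hmin, hQ]; norm_num [Matrix.cons_val_two, Matrix.cons_val_three, Matrix.cons_val_four]; ring
    · have hmin : m = p / (1 + 4 * p) := by
        rw [hm, min_eq_right]
        rw [div_le_div_iff₀ h4p (by norm_num)]
        nlinarith
      have ha : (0:ℝ) ≤ 1 / (1 + 4 * p) := div_nonneg (by norm_num) h4p.le
      have hb : (0:ℝ) ≤ p / (1 + 4 * p) := div_nonneg hp0 h4p.le
      refine ⟨![1/(1+4*p), p/(1+4*p), p/(1+4*p), p/(1+4*p), p/(1+4*p)], ?_, ?_, ?_⟩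
      · intro v; fin_cases v <;> first | exact ha | exact hb
      · rw [Fin.sum_univ_five]
        norm_num [Matrix.cons_val_two, Matrix.cons_val_three, Matrix.cons_val_four]
        field_simp
        ring
      · rw [hmin, hQ]
        norm_num [Matrix.cons_val_two, Matrix.cons_val_three, Matrix.cons_val_four]
        field_simp
        ring
  exact le_antisymm (csInf_le ⟨m, hlb⟩ hmem) (le_csInf ⟨m, hmem⟩ hlb)
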